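/- Let w be a string and 1 ≤ i ≤ |w|. Let lpal_w[i] be the length of the longest palindromic suffix of w[1..i], and when lpal_w[i] > 1, let lpal′_w[i] be the length of the second longest palindromic suffix of w[1..i] (the longest one of length < lpal_w[i]; it exists and is ≥ 1). Then: (1) if lpal_w[i] = 1 then ssp_w[i] = ∞; (2) if lpal_w[i] > 1 and lpal′_w[i] = 1 then ssp_w[i] = lpal_w[i]; (3) if lpal_w[i] > 1 and lpal′_w[i] > 1 then ssp_w[i] = ssp_w[i − lpal_w[i] + lpal′_w[i]]. -/

import Mathlib

open scoped ENat

variable {α : Type*}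

/-- `w` is a palindrome. -/
def IsPal (w : List α) : Prop := w.reverse = w

/-- The substring `w[i..j]`, 1-indexed, inclusive; empty if `i > j`. -/
def sub (w : List α) (i j : ℕ) : List α := (w.take j).drop (i - 1)

/-- Two strings of the same length pal-match: they agree on which substrings
`w[i..j]` (for `1 ≤ i < j ≤ |w|`) are palindromes. -/
def PalMatch (x y : List α) : Prop :=
  x.length = y.length ∧
    ∀ i j, 1 ≤ i → i < j → j ≤ x.length → (IsPal (sub x i j) ↔ IsPal (sub y i j))

/-- `sspAt w i` : length of the shortest palindromic suffix of `w[1..i]`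
of length at least 2, or `∞` if none exists. -/
noncomputable def sspAt (w : List α) (i : ℕ) : ℕ∞ :=
  sInf {ℓ : ℕ∞ | ∃ u : List α, u <:+ w.take i ∧ IsPal u ∧ 2 ≤ u.length ∧ (u.length : ℕ∞) = ℓ}

/-- The ssp-encoding of `w` as a sequence of length `|w|` over `ℕ ∪ {∞}`. -/
noncomputable def ssp (w : List α) : List ℕ∞ :=
  (List.range w.length).map fun k => sspAt w (k + 1)

/-- `lpalAt w i` : length of the longest palindromic suffix of `w[1..i]`. -/
noncomputable def lpalAt (w : List α) (i : ℕ) : ℕ :=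
  sSup {ℓ : ℕ | ∃ u : List α, u <:+ w.take i ∧ IsPal u ∧ u.length = ℓ}

/-- The lpal-encoding of `w`. -/
noncomputable def lpal (w : List α) : List ℕ :=
  (List.range w.length).map fun k => lpalAt w (k + 1)

/-- `lpal'At w i` : length of the second longest palindromic suffix of `w[1..i]`,
i.e. the longest one of length `< lpalAt w i`. -/
noncomputable def lpal'At {α : Type*} (w : List α) (i : ℕ) : ℕ :=
  sSup {ℓ : ℕ | ∃ u : List α, u <:+ w.take i ∧ IsPal u ∧ u.length = ℓ ∧ ℓ < lpalAt w i}

-- auxiliary lemmas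

lemma my_suffix_trans_len {x y z : List α} (hx : x <:+ z) (hy : y <:+ z)
    (h : x.length ≤ y.length) : x <:+ y := by
  obtain ⟨a, ha⟩ := hx
  obtain ⟨b, hb⟩ := hy
  have hxa : x = z.drop a.length := by rw [← ha, List.drop_left]
  have hyb : y = z.drop b.length := by rw [← hb, List.drop_left]
  have hlen : b.length ≤ a.length := by
    have h1 : a.length + x.length = z.length := by rw [← ha]; simp
    have h2 : b.length + y.length = z.length := by rw [← hb]; simp
    omega
  have hxy : x = y.drop (a.length - b.length) := by
    rw [hxa, hyb, List.drop_drop]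
    congr 1
    omega
  rw [hxy]
  exact List.drop_suffix _ _

lemma my_pal_suffix_prefix {u v : List α} (hu : IsPal u) (hv : IsPal v)
    (h : v <:+ u) : v <+: u := by
  have := h.reverse
  rwa [hu, hv] at this

lemma my_lpal_bdd (w : List α) (i : ℕ) :
    BddAbove {ℓ : ℕ | ∃ u : List α, u <:+ w.take i ∧ IsPal u ∧ u.length = ℓ} := by
  refine ⟨i, fun ℓ hℓ => ?_⟩
  obtain ⟨u, hu, _, rfl⟩ := hℓ
  exact le_trans hu.length_le (by simp)

lemma my_le_lpal {w : List α} {i : ℕ} {v : List α} (hv : v <:+ w.take i) (hvp : IsPal v) :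
    v.length ≤ lpalAt w i :=
  le_csSup (my_lpal_bdd w i) ⟨v, hv, hvp, rfl⟩

lemma my_lpal_spec (w : List α) (i : ℕ) :
    ∃ u : List α, u <:+ w.take i ∧ IsPal u ∧ u.length = lpalAt w i := by
  have h := Nat.sSup_mem (s := {ℓ : ℕ | ∃ u : List α, u <:+ w.take i ∧ IsPal u ∧ u.length = ℓ})
    ⟨0, [], List.nil_suffix, rfl, rfl⟩ (my_lpal_bdd w i)
  exact h

lemma my_lpal'_bdd (w : List α) (i : ℕ) :
    BddAbove {ℓ : ℕ | ∃ u : List α, u <:+ w.take i ∧ IsPal u ∧ u.length = ℓ ∧ ℓ < lpalAt w i} := by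
  refine ⟨i, fun ℓ hℓ => ?_⟩
  obtain ⟨u, hu, _, rfl, _⟩ := hℓ
  exact le_trans hu.length_le (by simp)

lemma my_le_lpal' {w : List α} {i : ℕ} {v : List α} (hv : v <:+ w.take i) (hvp : IsPal v)
    (hlt : v.length < lpalAt w i) : v.length ≤ lpal'At w i :=
  le_csSup (my_lpal'_bdd w i) ⟨v, hv, hvp, rfl, hlt⟩

lemma my_lpal'_spec (w : List α) (i : ℕ) (h : 0 < lpalAt w i) :
    ∃ u : List α, u <:+ w.take i ∧ IsPal u ∧ u.length = lpal'At w i ∧ lpal'At w i < lpalAt w i := by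
  have hh := Nat.sSup_mem
    (s := {ℓ : ℕ | ∃ u : List α, u <:+ w.take i ∧ IsPal u ∧ u.length = ℓ ∧ ℓ < lpalAt w i})
    ⟨0, [], List.nil_suffix, rfl, rfl, h⟩ (my_lpal'_bdd w i)
  exact hh


/-- Recurrence computing `ssp` from `lpal` and the second longest palindromic suffix:
(1) if `lpal_w[i] = 1` then `ssp_w[i] = ∞`;
(2) if `lpal_w[i] > 1` and `lpal'_w[i] = 1` then `ssp_w[i] = lpal_w[i]`;
(3) if `lpal_w[i] > 1` and `lpal'_w[i] > 1` then
`ssp_w[i] = ssp_w[i - lpal_w[i] + lpal'_w[i]]`. -/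
theorem stmt12 {α : Type*} (w : List α) (i : ℕ) (hi : 1 ≤ i) (hiw : i ≤ w.length) :
    (lpalAt w i = 1 → sspAt w i = ⊤) ∧
    (1 < lpalAt w i → lpal'At w i = 1 → sspAt w i = ((lpalAt w i : ℕ) : ℕ∞)) ∧
    (1 < lpalAt w i → 1 < lpal'At w i →
      sspAt w i = sspAt w (i - lpalAt w i + lpal'At w i)) := by
  refine ⟨fun hL1 => ?_, fun hL hL' => ?_, fun hL hL' => ?_⟩
  · -- case 1
    have hempty : {ℓ : ℕ∞ | ∃ u : List α, u <:+ w.take i ∧ IsPal u ∧ 2 ≤ u.length ∧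
        (u.length : ℕ∞) = ℓ} = ∅ := by
      ext ℓ
      simp only [Set.mem_setOf_eq, Set.mem_empty_iff_false, iff_false]
      rintro ⟨u, hu, hup, h2, rfl⟩
      have := my_le_lpal hu hup
      omega
    rw [sspAt, hempty, sInf_empty]
  · -- case 2
    obtain ⟨u, hu, hup, huL⟩ := my_lpal_spec w i
    apply le_antisymm
    · exact sInf_le ⟨u, hu, hup, by omega, by rw [huL]⟩
    · refine le_sInf ?_
      rintro b ⟨v, hv, hvp, h2, rfl⟩
      have h1 := my_le_lpal hv hvp
      have heq : v.length = lpalAt w i := by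
        by_contra hne
        have : v.length < lpalAt w i := by omega
        have := my_le_lpal' hv hvp this
        omega
      rw [heq]
  · -- case 3
    set L := lpalAt w i with hLdef
    set L' := lpal'At w i with hL'def
    obtain ⟨u, hu, hup, huL⟩ := my_lpal_spec w i
    obtain ⟨u', hu', hu'p, hu'L, hu'lt⟩ := my_lpal'_spec w i (by omega)
    have hLi : L ≤ i := by
      have h1 := hu.length_le
      have h2 := List.length_take_le i w
      omega
    set j := i - L + L' with hjdef
    have hji : j ≤ i := by omega
    -- u' is a suffix of w.take j
    have hu'u : u' <:+ u := my_suffix_trans_len hu' hu (by omega)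
    have hu'pref : u' <+: u := my_pal_suffix_prefix hup hu'p hu'u
    have hkey : u' <:+ w.take j := by
      obtain ⟨t, ht⟩ := hu
      have htlen : t.length = i - L := by
        have : t.length + u.length = (w.take i).length := by rw [← ht]; simp
        rw [List.length_take, min_eq_left hiw] at this
        omega
      have htake : w.take j = t ++ u' := by
        have h1 : w.take j = (w.take i).take j := by
          rw [List.take_take, min_eq_left hji]
        rw [h1, ← ht]
        have h2 : j = t.length + L' := by omega
        rw [h2, List.take_append, List.take_of_length_le (by omega), Nat.add_sub_cancel_left]
        congr 1
        rw [hL'def, ← hu'L]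
        exact (List.prefix_iff_eq_take.mp hu'pref).symm
      rw [htake]
      exact List.suffix_append _ _
    -- region equivalence
    have region : ∀ v : List α, v.length ≤ L' → (v <:+ w.take i ↔ v <:+ w.take j) := by
      intro v hvlen
      constructor
      · intro hv
        exact (my_suffix_trans_len hv hu' (by omega)).trans hkey
      · intro hv
        exact (my_suffix_trans_len hv hkey (by omega)).trans hu'
    set A := {ℓ : ℕ∞ | ∃ v : List α, v <:+ w.take i ∧ IsPal v ∧ 2 ≤ v.length ∧
        (v.length : ℕ∞) = ℓ} with hAdef
    set B := {ℓ : ℕ∞ | ∃ v : List α, v <:+ w.take j ∧ IsPal v ∧ 2 ≤ v.length ∧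
        (v.length : ℕ∞) = ℓ} with hBdef
    have hL'A : ((L' : ℕ) : ℕ∞) ∈ A := ⟨u', hu', hu'p, by omega, by rw [hu'L]⟩
    have hL'B : ((L' : ℕ) : ℕ∞) ∈ B := ⟨u', hkey, hu'p, by omega, by rw [hu'L]⟩
    have hAne : A.Nonempty := ⟨_, hL'A⟩
    have hBne : B.Nonempty := ⟨_, hL'B⟩
    have hAmem : sInf A ∈ A := csInf_mem hAne
    have hBmem : sInf B ∈ B := csInf_mem hBne
    have hAle : sInf A ≤ ((L' : ℕ) : ℕ∞) := sInf_le hL'A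
    have hBle : sInf B ≤ ((L' : ℕ) : ℕ∞) := sInf_le hL'B
    show sInf A = sInf B
    apply le_antisymm
    · obtain ⟨v, hv, hvp, h2, hvl⟩ := hBmem
      have hvlen : v.length ≤ L' := by
        exact_mod_cast le_trans hvl.le hBle
      refine le_trans (sInf_le ?_) hvl.le
      exact ⟨v, (region v hvlen).mpr hv, hvp, h2, rfl⟩
    · obtain ⟨v, hv, hvp, h2, hvl⟩ := hAmem
      have hvlen : v.length ≤ L' := by
        exact_mod_cast le_trans hvl.le hAle
      refine le_trans (sInf_le ?_) hvl.le
      exact ⟨v, (region v hvlen).mp hv, hvp, h2, rfl⟩
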